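/- The Nijenhuis–Richardson bracket on Hom(Λ^• V, V), defined on decomposables by [φ₁⊗w₁, φ₂⊗w₂] = φ₁∧ι_{w₁}(φ₂) ⊗ w₂ − (−1)^{(k₁−1)(k₂−1)} φ₂∧ι_{w₂}(φ₁) ⊗ w₁ for φᵢ ∈ Λ^{kᵢ}V*, wᵢ ∈ V, restricts to the subspaces K_j = {φ : φ(W, Λ^{j-1}V) ⊆ W}: if ψ₁ ∈ K_{k₁} and ψ₂ ∈ K_{k₂} then [ψ₁, ψ₂] ∈ K_{k₁+k₂−1}. -/

import Mathlib

open Finset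

variable {V : Type*} [AddCommGroup V] [Module ℝ V]

/-- The insertion operator `i_P Q` of the Nijenhuis–Richardson bracket, as a function:
the (normalized) alternatization of `(v₁,…) ↦ Q(P(v₁,…,v_{k+1}), v_{k+2},…)`. -/
noncomputable def nrHook {k l : ℕ} (P : V [⋀^Fin (k + 1)]→ₗ[ℝ] V)
    (Q : V [⋀^Fin (l + 1)]→ₗ[ℝ] V) : (Fin (k + 1 + l) → V) → V :=
  fun v => (((Nat.factorial (k + 1)) * Nat.factorial l : ℝ))⁻¹ •
    ∑ σ : Equiv.Perm (Fin (k + 1 + l)),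
      (Equiv.Perm.sign σ : ℤ) •
        Q (Fin.cons (P fun i : Fin (k + 1) => v (σ (Fin.castAdd l i)))
            fun j : Fin l => v (σ (Fin.natAdd (k + 1) j)))

/-- The Nijenhuis–Richardson bracket `[P, Q] = i_P Q − (−1)^{(k₁−1)(k₂−1)} i_Q P`
of `P ∈ Hom(Λ^{k+1}V, V)` and `Q ∈ Hom(Λ^{l+1}V, V)`, as a function on `(k+l+1)`-tuples. -/
noncomputable def nrBracket {k l : ℕ} (P : V [⋀^Fin (k + 1)]→ₗ[ℝ] V)
    (Q : V [⋀^Fin (l + 1)]→ₗ[ℝ] V) : (Fin (k + 1 + l) → V) → V :=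
  fun v => nrHook P Q v -
    ((-1 : ℤ) ^ (k * l)) • nrHook Q P (fun i : Fin (l + 1 + k) => v (Fin.cast (by omega) i))


lemma alt_mem_of_mem {n : ℕ} (W : Submodule ℝ V) (ψ : V [⋀^Fin (n + 1)]→ₗ[ℝ] V)
    (h : ∀ v : Fin (n + 1) → V, v 0 ∈ W → ψ v ∈ W)
    (v : Fin (n + 1) → V) (i : Fin (n + 1)) (hv : v i ∈ W) : ψ v ∈ W := by
  rcases eq_or_ne i 0 with rfl | h0
  · exact h v hv
  · have hs := ψ.map_swap v h0.symm
    have hm : ψ (v ∘ Equiv.swap 0 i) ∈ W := by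
      apply h
      simpa [Equiv.swap_apply_left] using hv
    rw [hs] at hm
    simpa using neg_mem hm

lemma nrHook_mem (W : Submodule ℝ V) {k l : ℕ} (P : V [⋀^Fin (k + 1)]→ₗ[ℝ] V)
    (Q : V [⋀^Fin (l + 1)]→ₗ[ℝ] V)
    (hP : ∀ v : Fin (k + 1) → V, v 0 ∈ W → P v ∈ W)
    (hQ : ∀ v : Fin (l + 1) → V, v 0 ∈ W → Q v ∈ W)
    (v : Fin (k + 1 + l) → V) (hv : v ⟨0, by positivity⟩ ∈ W) :
    nrHook P Q v ∈ W := by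
  unfold nrHook
  refine W.smul_mem _ (Submodule.sum_mem _ fun σ _ => zsmul_mem ?_ _)
  set z : Fin (k + 1 + l) := ⟨0, by positivity⟩ with hz
  set x := σ.symm z with hx
  by_cases hxl : (x : ℕ) < k + 1
  · have hPmem : P (fun i : Fin (k + 1) => v (σ (Fin.castAdd l i))) ∈ W := by
      apply alt_mem_of_mem W P hP _ ⟨(x : ℕ), hxl⟩
      have he : Fin.castAdd l ⟨(x : ℕ), hxl⟩ = x := by ext; simp
      rw [he, hx]
      simpa using hv
    apply hQ
    simpa using hPmem
  · have hxu : (x : ℕ) - (k + 1) < l := by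
      have := x.isLt; omega
    apply alt_mem_of_mem W Q hQ _ (Fin.succ ⟨(x : ℕ) - (k + 1), hxu⟩)
    rw [Fin.cons_succ]
    have he : Fin.natAdd (k + 1) ⟨(x : ℕ) - (k + 1), hxu⟩ = x := by
      ext; simp; omega
    rw [he, hx]
    simpa using hv

/-- the Nijenhuis–Richardson bracket restricts to the subspaces
`K_j = {ψ : ψ(W, Λ^{j-1}V) ⊆ W}`: if `ψ₁ ∈ K_{k+1}` and `ψ₂ ∈ K_{l+1}`, then
`[ψ₁, ψ₂] ∈ K_{k+l+1}`. -/
theorem nrBracket_mem_tangentK (W : Submodule ℝ V) {k l : ℕ}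
    (ψ₁ : V [⋀^Fin (k + 1)]→ₗ[ℝ] V) (ψ₂ : V [⋀^Fin (l + 1)]→ₗ[ℝ] V)
    (h₁ : ∀ v : Fin (k + 1) → V, v 0 ∈ W → ψ₁ v ∈ W)
    (h₂ : ∀ v : Fin (l + 1) → V, v 0 ∈ W → ψ₂ v ∈ W) :
    ∀ v : Fin (k + 1 + l) → V, v ⟨0, by omega⟩ ∈ W → nrBracket ψ₁ ψ₂ v ∈ W := by
  intro v hv
  refine sub_mem (nrHook_mem W ψ₁ ψ₂ h₁ h₂ v hv) (zsmul_mem ?_ _)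
  exact nrHook_mem W ψ₂ ψ₁ h₂ h₁ _ (by simpa using hv)
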